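/- (Proposition 3, periodic-tail stability constraint) Let η > 0, δ > 0, γ ≥ 0, t_k ∈ ℝ, x_z^k ∈ ℝ, C a positive integer, and let (v_i)_{i≥0} be a C-periodic sequence of reals (v_{i+C} = v_i for all i ≥ 0) with |v_i| ≤ γ. Define the piecewise-linear ZMP trajectory x_z(t) = x_z^k + Σ_{i=0}^∞ (ρ(t − t_{k+i}) − ρ(t − t_{k+i+1})) v_i, where ρ(t) = max(t,0) and t_{k+i} = t_k + iδ, and set x_u^k = η ∫_{t_k}^∞ e^{−η(τ−t_k)} x_z(τ) dτ. Then Σ_{i=0}^{C−1} e^{−iηδ} v_i = η · ((1 − e^{−Cηδ})/(1 − e^{−ηδ})) · (x_u^k − x_z^k). -/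

import Mathlib

open MeasureTheory Real Set Filter Topology
open scoped ENNReal NNReal

lemma aux_exp_int (η tk : ℝ) (hη : 0 < η) :
    IntegrableOn (fun τ => Real.exp (-η*(τ-tk))) (Set.Ioi tk) ∧
    ∫ τ in Set.Ioi tk, Real.exp (-η*(τ-tk)) = 1/η := by
  have hF : ∀ x : ℝ, HasDerivAt (fun τ => -(1/η) * Real.exp (-η*(τ-tk)))
      (Real.exp (-η*(x-tk))) x := by
    intro x
    have h1 : HasDerivAt (fun τ : ℝ => -η*(τ-tk)) (-η) x := by
      simpa using ((hasDerivAt_id x).sub_const tk).const_mul (-η)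
    have h2 : HasDerivAt (fun τ => Real.exp (-η*(τ-tk))) (Real.exp (-η*(x-tk)) * (-η)) x :=
      (Real.hasDerivAt_exp _).comp x h1
    have := h2.const_mul (-(1/η))
    refine this.congr_deriv ?_
    field_simp [hη.ne']
  have htend : Tendsto (fun τ => -(1/η) * Real.exp (-η*(τ-tk))) atTop (𝓝 0) := by
    have h0 : Tendsto (fun τ : ℝ => η*(τ - tk)) atTop atTop := by
      apply Filter.Tendsto.const_mul_atTop hη
      simpa [sub_eq_add_neg] using tendsto_atTop_add_const_right atTop (-tk) tendsto_id
    have h2 : Tendsto (fun τ : ℝ => Real.exp (-η*(τ-tk))) atTop (𝓝 0) := by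
      exact Tendsto.congr (fun τ => by simp [Function.comp_def, neg_mul])
        (Real.tendsto_exp_neg_atTop_nhds_zero.comp h0)
    simpa using h2.const_mul (-(1/η))
  have hpos : ∀ x ∈ Ioi tk, 0 ≤ Real.exp (-η*(x-tk)) := fun x _ => (Real.exp_pos _).le
  constructor
  · exact integrableOn_Ioi_deriv_of_nonneg' (fun x _ => hF x) hpos htend
  · have := integral_Ioi_of_hasDerivAt_of_nonneg' (fun x _ => hF x) hpos htend
    rw [this]
    simp

lemma aux_ramp_int (η tk a : ℝ) (hη : 0 < η) (ha : 0 ≤ a) :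
    IntegrableOn (fun τ => Real.exp (-η*(τ-tk)) * max (τ - (tk+a)) 0) (Set.Ioi tk) ∧
    ∫ τ in Set.Ioi tk, Real.exp (-η*(τ-tk)) * max (τ - (tk+a)) 0 = Real.exp (-η*a)/η^2 := by
  set b := tk + a with hb
  have hb' : tk ≤ b := by simp [hb, ha]
  -- derivative fact
  have hF : ∀ x : ℝ, HasDerivAt (fun τ => -Real.exp (-η*(τ-tk)) * ((τ-b)/η + 1/η^2))
      (Real.exp (-η*(x-tk)) * (x-b)) x := by
    intro x
    have h1 : HasDerivAt (fun τ : ℝ => -η*(τ-tk)) (-η) x := by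
      simpa using ((hasDerivAt_id x).sub_const tk).const_mul (-η)
    have h2 : HasDerivAt (fun τ => Real.exp (-η*(τ-tk))) (Real.exp (-η*(x-tk)) * (-η)) x :=
      (Real.hasDerivAt_exp _).comp x h1
    have h3 : HasDerivAt (fun τ : ℝ => (τ-b)/η + 1/η^2) (1/η) x := by
      exact (((hasDerivAt_id x).sub_const b).div_const η).add_const (1/η^2)
    have := h2.neg.mul h3
    refine this.congr_deriv ?_
    simp only [Pi.neg_apply]
    field_simp [hη.ne']
    ring
  have htend : Tendsto (fun τ => -Real.exp (-η*(τ-tk)) * ((τ-b)/η + 1/η^2)) atTop (𝓝 0) := by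
    have h0 : Tendsto (fun τ : ℝ => η*(τ - tk)) atTop atTop := by
      apply Filter.Tendsto.const_mul_atTop hη
      simpa [sub_eq_add_neg] using tendsto_atTop_add_const_right atTop (-tk) tendsto_id
    have he : Tendsto (fun τ : ℝ => Real.exp (-η*(τ-tk))) atTop (𝓝 0) :=
      Tendsto.congr (fun τ => by simp [Function.comp_def, neg_mul])
        (Real.tendsto_exp_neg_atTop_nhds_zero.comp h0)
    have hxe : Tendsto (fun τ : ℝ => (η*(τ-tk)) * Real.exp (-η*(τ-tk))) atTop (𝓝 0) := by
      have h1 := (tendsto_pow_mul_exp_neg_atTop_nhds_zero 1).comp h0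
      exact Tendsto.congr (fun τ => by simp [Function.comp_def, neg_mul]) h1
    have := ((hxe.const_mul (1/η^2)).add (he.const_mul (1/η^2 - a/η))).neg
    simp only [mul_zero, add_zero, neg_zero, zero_add] at this
    refine Tendsto.congr (fun τ => ?_) this
    field_simp [hb]
    ring
  have hpos : ∀ x ∈ Set.Ioi b, 0 ≤ Real.exp (-η*(x-tk)) * (x-b) := fun x hx =>
    mul_nonneg (Real.exp_pos _).le (by simp [le_of_lt (Set.mem_Ioi.mp hx)])
  have hint_b : IntegrableOn (fun τ => Real.exp (-η*(τ-tk)) * (τ-b)) (Set.Ioi b) :=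
    integrableOn_Ioi_deriv_of_nonneg' (fun x _ => hF x) hpos htend
  have hval_b : ∫ τ in Set.Ioi b, Real.exp (-η*(τ-tk)) * (τ-b) = Real.exp (-η*a)/η^2 := by
    rw [integral_Ioi_of_hasDerivAt_of_nonneg' (fun x _ => hF x) hpos htend]
    have : b - tk = a := by simp [hb]
    rw [this]
    field_simp
    ring
  -- transfer to the max form
  have heq1 : Set.EqOn (fun τ => Real.exp (-η*(τ-tk)) * (τ-b))
      (fun τ => Real.exp (-η*(τ-tk)) * max (τ - b) 0) (Set.Ioi b) := by
    intro τ hτ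
    simp only
    rw [max_eq_left (by simp [le_of_lt (Set.mem_Ioi.mp hτ)])]
  have heq0 : Set.EqOn (fun _ : ℝ => (0:ℝ))
      (fun τ => Real.exp (-η*(τ-tk)) * max (τ - b) 0) (Set.Ioc tk b) := by
    intro τ hτ
    simp only
    rw [max_eq_right (by simp [hτ.2]), mul_zero]
  have hint1 : IntegrableOn (fun τ => Real.exp (-η*(τ-tk)) * max (τ - b) 0) (Set.Ioi b) :=
    hint_b.congr_fun heq1 measurableSet_Ioi
  have hint0 : IntegrableOn (fun τ => Real.exp (-η*(τ-tk)) * max (τ - b) 0) (Set.Ioc tk b) :=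
    (integrableOn_zero).congr_fun heq0 measurableSet_Ioc
  have hunion : Set.Ioc tk b ∪ Set.Ioi b = Set.Ioi tk := Set.Ioc_union_Ioi_eq_Ioi hb'
  constructor
  · rw [← hunion]; exact hint0.union hint1
  · rw [← hunion, setIntegral_union (Set.Ioc_disjoint_Ioi le_rfl) measurableSet_Ioi hint0 hint1]
    rw [setIntegral_congr_fun measurableSet_Ioc heq0.symm]
    simp only [integral_zero, zero_add]
    rw [setIntegral_congr_fun measurableSet_Ioi heq1.symm, hval_b]

lemma aux_periodic_tsum (r : ℝ) (hr0 : 0 ≤ r) (hr1 : r < 1) (C : ℕ) (hC : 0 < C)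
    (v : ℕ → ℝ) (hper : ∀ i, v (i + C) = v i) (γ : ℝ) (hv : ∀ i, |v i| ≤ γ) :
    ∑' i : ℕ, r^i * v i = (∑ i ∈ Finset.range C, r^i * v i) / (1 - r^C) := by
  haveI : NeZero C := ⟨hC.ne'⟩
  have hsum : Summable (fun i : ℕ => r^i * v i) := by
    apply Summable.of_norm_bounded (g := fun i => γ * r^i)
      ((summable_geometric_of_lt_one hr0 hr1).mul_left γ)
    intro i
    rw [norm_mul, norm_pow, Real.norm_eq_abs, abs_of_nonneg hr0, Real.norm_eq_abs, mul_comm]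
    exact mul_le_mul_of_nonneg_right (hv i) (pow_nonneg hr0 i)
  have hvp : ∀ q s : ℕ, v (q * C + s) = v s := by
    intro q
    induction q with
    | zero => simp
    | succ q ih =>
      intro s
      have : (q+1) * C + s = (q * C + s) + C := by ring
      rw [this, hper, ih]
  have hrC : r^C < 1 := pow_lt_one₀ hr0 hr1 hC.ne'
  have hrC0 : 0 ≤ r^C := pow_nonneg hr0 C
  have hequiv := ((Nat.divModEquiv C).symm.tsum_eq (fun i => r^i * v i)).symm
  have hterm : ∀ p : ℕ × Fin C,
      (fun i => r^i * v i) ((Nat.divModEquiv C).symm p) = (r^C)^p.1 * (r^(p.2:ℕ) * v p.2) := by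
    rintro ⟨q, s⟩
    simp only [Nat.divModEquiv, Equiv.coe_fn_symm_mk]
    rw [hvp q s, pow_add, pow_mul]
    ring
  rw [hequiv, tsum_congr hterm]
  have hsum2 : Summable (fun p : ℕ × Fin C => (r^C)^p.1 * (r^(p.2:ℕ) * v p.2)) := by
    have := ((Nat.divModEquiv C).symm.summable_iff (f := fun i => r^i * v i)).mpr hsum
    exact this.congr (fun p => (hterm p))
  rw [Summable.tsum_prod' hsum2 (fun q => Summable.of_finite)]
  have : ∀ q : ℕ, ∑' s : Fin C, (r^C)^q * (r^(s:ℕ) * v s)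
      = (r^C)^q * ∑ i ∈ Finset.range C, r^i * v i := by
    intro q
    rw [tsum_fintype, Finset.mul_sum, Fin.sum_univ_eq_sum_range (fun i => (r^C)^q * (r^i * v i))]
  rw [tsum_congr this, tsum_mul_right, tsum_geometric_of_lt_one hrC0 hrC]
  rw [div_eq_inv_mul, mul_comm]

/-- Proposition 3, periodic-tail stability constraint: if the ZMP velocity
samples are `C`-periodic and bounded by `γ`, then
`Σ_{i=0}^{C−1} e^{−iηδ} v_i = η ((1 − e^{−Cηδ})/(1 − e^{−ηδ})) (x_u^k − x_z^k)`. -/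
theorem stmt_11 (η δ γ tk xzk : ℝ) (hη : 0 < η) (hδ : 0 < δ) (hγ : 0 ≤ γ)
    (C : ℕ) (hC : 0 < C)
    (v : ℕ → ℝ) (hper : ∀ i, v (i + C) = v i) (hv : ∀ i, |v i| ≤ γ)
    (xz : ℝ → ℝ)
    (hxz : ∀ t, xz t = xzk + ∑' i : ℕ,
      (max (t - (tk + i * δ)) 0 - max (t - (tk + (i + 1) * δ)) 0) * v i)
    (xuk : ℝ)
    (hxuk : xuk = η * ∫ τ in Set.Ioi tk, Real.exp (-η * (τ - tk)) * xz τ) :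
    ∑ i ∈ Finset.range C, Real.exp (-(i : ℝ) * η * δ) * v i
      = η * ((1 - Real.exp (-(C : ℝ) * η * δ)) / (1 - Real.exp (-η * δ))) * (xuk - xzk) := by
  have hη' : η ≠ 0 := hη.ne'
  set r : ℝ := Real.exp (-(η*δ)) with hrdef
  have hr0 : (0:ℝ) < r := Real.exp_pos _
  have hr0' : (0:ℝ) ≤ r := hr0.le
  have hr1 : r < 1 := by
    rw [hrdef, Real.exp_lt_one_iff]
    nlinarith [mul_pos hη hδ]
  have hrpow : ∀ i : ℕ, r ^ i = Real.exp (-η * ((i:ℝ) * δ)) := by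
    intro i
    rw [hrdef, ← Real.exp_nat_mul]
    congr 1
    ring
  set E : ℝ → ℝ := fun τ => Real.exp (-η*(τ-tk)) with hE
  set d : ℕ → ℝ → ℝ :=
    fun i τ => max (τ - (tk + (i:ℝ)*δ)) 0 - max (τ - (tk + ((i:ℝ)+1)*δ)) 0 with hd
  set u : ℕ → ℝ → ℝ := fun i τ => d i τ * v i with hu
  -- basic facts about d
  have hd_nonneg : ∀ i τ, 0 ≤ d i τ := by
    intro i τ
    simp only [hd]
    have h1 : τ - (tk + ((i:ℝ)+1)*δ) ≤ τ - (tk + (i:ℝ)*δ) := by nlinarith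
    have := max_le_max h1 (le_refl (0:ℝ))
    linarith
  have hd_zero : ∀ (i : ℕ) (τ : ℝ), τ ≤ tk + (i:ℝ)*δ → d i τ = 0 := by
    intro i τ h
    simp only [hd]
    rw [max_eq_right (by linarith), max_eq_right (by nlinarith)]
    ring
  have hNbd : ∀ τ : ℝ, ∃ N : ℕ, ∀ i ≥ N, τ ≤ tk + (i:ℝ)*δ := by
    intro τ
    refine ⟨⌈(τ - tk)/δ⌉₊, fun i hi => ?_⟩
    have h1 : (τ - tk)/δ ≤ (i:ℝ) := le_trans (Nat.le_ceil _) (by exact_mod_cast hi)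
    have h2 := (div_le_iff₀ hδ).mp h1
    linarith
  have hd_summable : ∀ τ, Summable (fun i => d i τ) := by
    intro τ
    obtain ⟨N, hN⟩ := hNbd τ
    exact summable_of_ne_finset_zero (s := Finset.range N)
      (fun i hi => hd_zero i τ (hN i (Nat.le_of_not_lt (by simpa using hi))))
  have hd_tsum : ∀ τ, ∑' i, d i τ = max (τ - tk) 0 := by
    intro τ
    obtain ⟨N, hN⟩ := hNbd τ
    rw [tsum_eq_sum (s := Finset.range N)
      (fun i hi => hd_zero i τ (hN i (Nat.le_of_not_lt (by simpa using hi))))]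
    have hcongr : ∀ i ∈ Finset.range N, d i τ =
        (fun j : ℕ => max (τ - (tk + (j:ℝ)*δ)) 0) i
          - (fun j : ℕ => max (τ - (tk + (j:ℝ)*δ)) 0) (i+1) := by
      intro i _
      simp only [hd]
      push_cast
      ring_nf
    rw [Finset.sum_congr rfl hcongr, Finset.sum_range_sub']
    have hN0 : max (τ - (tk + (N:ℝ)*δ)) 0 = 0 := max_eq_right (by linarith [hN N le_rfl])
    simp [hN0]
  have hu_abs : ∀ i τ, |u i τ| ≤ d i τ * γ := by
    intro i τ
    simp only [hu]
    rw [abs_mul, abs_of_nonneg (hd_nonneg i τ)]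
    exact mul_le_mul_of_nonneg_left (hv i) (hd_nonneg i τ)
  -- the key per-index integral computation
  have key : ∀ (c : ℝ) (i : ℕ),
      IntegrableOn (fun τ => E τ * (d i τ * c)) (Set.Ioi tk) ∧
      ∫ τ in Set.Ioi tk, E τ * (d i τ * c) = (r^i - r^(i+1)) / η^2 * c := by
    intro c i
    have ha1 : (0:ℝ) ≤ (i:ℝ)*δ := by positivity
    have ha2 : (0:ℝ) ≤ ((i:ℝ)+1)*δ := by positivity
    have h1 := aux_ramp_int η tk ((i:ℝ)*δ) hη ha1
    have h2 := aux_ramp_int η tk (((i:ℝ)+1)*δ) hη ha2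
    have heq : (fun τ => E τ * (d i τ * c)) =
        (fun τ => (Real.exp (-η*(τ-tk)) * max (τ - (tk + (i:ℝ)*δ)) 0
          - Real.exp (-η*(τ-tk)) * max (τ - (tk + ((i:ℝ)+1)*δ)) 0) * c) := by
      funext τ
      simp only [hE, hd]
      ring
    constructor
    · rw [heq]
      exact ((h1.1.sub h2.1).mul_const c)
    · rw [heq, integral_mul_const, integral_sub h1.1 h2.1, h1.2, h2.2,
        hrpow i, hrpow (i+1)]
      push_cast
      ring
  have hG_int : ∀ i, IntegrableOn (fun τ => E τ * u i τ) (Set.Ioi tk) := fun i => (key (v i) i).1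
  have hG_val : ∀ i, ∫ τ in Set.Ioi tk, E τ * u i τ = (r^i - r^(i+1)) / η^2 * v i :=
    fun i => (key (v i) i).2
  have hG_cont : ∀ i, Continuous (fun τ => E τ * u i τ) := by
    intro i
    simp only [hE, hu, hd]
    fun_prop
  -- summability pointwise
  have hG_summable : ∀ τ, Summable (fun i => E τ * u i τ) := by
    intro τ
    obtain ⟨N, hN⟩ := hNbd τ
    refine summable_of_ne_finset_zero (s := Finset.range N) (fun i hi => ?_)
    simp only [hu]
    rw [hd_zero i τ (hN i (Nat.le_of_not_lt (by simpa using hi)))]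
    ring
  have hG_norm_summable : ∀ τ, Summable (fun i => ‖E τ * u i τ‖) := by
    intro τ
    obtain ⟨N, hN⟩ := hNbd τ
    refine summable_of_ne_finset_zero (s := Finset.range N) (fun i hi => ?_)
    simp only [hu]
    rw [hd_zero i τ (hN i (Nat.le_of_not_lt (by simpa using hi)))]
    simp
  -- lintegral bound
  have hlint : ∑' i, ∫⁻ τ in Set.Ioi tk, ‖E τ * u i τ‖₊ ≠ ⊤ := by
    have hle : ∀ i, ∫⁻ τ in Set.Ioi tk, ‖E τ * u i τ‖₊
        ≤ ENNReal.ofReal ((r^i - r^(i+1)) / η^2 * γ) := by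
      intro i
      have hbi := key γ i
      have h1 : ∀ τ, (‖E τ * u i τ‖₊ : ℝ≥0∞) ≤ ‖E τ * (d i τ * γ)‖₊ := by
        intro τ
        have h2 : ‖E τ * u i τ‖ ≤ ‖E τ * (d i τ * γ)‖ := by
          rw [Real.norm_eq_abs, Real.norm_eq_abs, abs_mul (E τ) (u i τ), abs_mul (E τ) (d i τ * γ)]
          refine mul_le_mul_of_nonneg_left ?_ (abs_nonneg (E τ))
          rw [abs_of_nonneg (mul_nonneg (hd_nonneg i τ) hγ)]
          exact hu_abs i τ
        exact_mod_cast h2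
      calc ∫⁻ τ in Set.Ioi tk, ‖E τ * u i τ‖₊
          ≤ ∫⁻ τ in Set.Ioi tk, ‖E τ * (d i τ * γ)‖₊ := lintegral_mono (fun τ => h1 τ)
        _ = ENNReal.ofReal (∫ τ in Set.Ioi tk, ‖E τ * (d i τ * γ)‖) :=
            (ofReal_integral_norm_eq_lintegral_enorm hbi.1).symm
        _ = ENNReal.ofReal ((r^i - r^(i+1)) / η^2 * γ) := by
            rw [setIntegral_congr_fun measurableSet_Ioi (g := fun τ => E τ * (d i τ * γ))
              (fun τ _ => by
                rw [Real.norm_eq_abs, abs_of_nonneg]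
                exact mul_nonneg (Real.exp_pos _).le (mul_nonneg (hd_nonneg i τ) hγ)),
              hbi.2]
    refine ne_top_of_le_ne_top ?_ (ENNReal.tsum_le_tsum hle)
    have h2 : ∀ i, ENNReal.ofReal ((r^i - r^(i+1)) / η^2 * γ)
        ≤ ENNReal.ofReal ((1-r)/η^2*γ) * (ENNReal.ofReal r)^i := by
      intro i
      have hc : (0:ℝ) ≤ (1-r)/η^2*γ :=
        mul_nonneg (div_nonneg (by linarith) (sq_nonneg η)) hγ
      rw [← ENNReal.ofReal_pow hr0', ← ENNReal.ofReal_mul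
        (mul_nonneg (div_nonneg (by linarith) (sq_nonneg η)) hγ)]
      apply ENNReal.ofReal_le_ofReal
      have hh : r^i - r^(i+1) = (1-r) * r^i := by ring
      rw [hh]
      exact le_of_eq (by ring)
    refine ne_top_of_le_ne_top ?_ (ENNReal.tsum_le_tsum h2)
    rw [ENNReal.tsum_mul_left, ENNReal.tsum_geometric]
    refine ENNReal.mul_ne_top ENNReal.ofReal_ne_top (ENNReal.inv_ne_top.2 ?_)
    intro hcontra
    rw [tsub_eq_zero_iff_le] at hcontra
    exact absurd (lt_of_lt_of_le (ENNReal.ofReal_lt_one.2 hr1) hcontra) (lt_irrefl _)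
  -- interchange
  have hinter : ∫ τ in Set.Ioi tk, (∑' i, E τ * u i τ) ∂volume
      = ∑' i, ∫ τ in Set.Ioi tk, E τ * u i τ :=
    integral_tsum (fun i => (hG_cont i).aestronglyMeasurable) hlint
  -- value of the series of integrals
  have hT_sum : Summable (fun i : ℕ => r^i * v i) := by
    apply Summable.of_norm_bounded (g := fun i => γ * r^i)
      ((summable_geometric_of_lt_one hr0' hr1).mul_left γ)
    intro i
    rw [norm_mul, norm_pow, Real.norm_eq_abs, abs_of_nonneg hr0', Real.norm_eq_abs, mul_comm]
    exact mul_le_mul_of_nonneg_right (hv i) (pow_nonneg hr0' i)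
  have hRHS : ∑' i, ∫ τ in Set.Ioi tk, E τ * u i τ = (1-r)/η^2 * ∑' i, r^i * v i := by
    have hterm : ∀ i : ℕ, ∫ τ in Set.Ioi tk, E τ * u i τ = (1-r)/η^2 * (r^i * v i) := by
      intro i
      rw [hG_val i]
      ring
    rw [tsum_congr hterm]
    exact tsum_mul_left
  -- S := the series function, integrability
  set S : ℝ → ℝ := fun τ => ∑' i, E τ * u i τ with hS
  have hS_meas : AEStronglyMeasurable S (volume.restrict (Set.Ioi tk)) := by
    refine aestronglyMeasurable_of_tendsto_ae atTop
      (f := fun n τ => ∑ i ∈ Finset.range n, E τ * u i τ)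
      (fun n => Continuous.aestronglyMeasurable (by
        apply continuous_finset_sum
        intro i _
        exact hG_cont i)) ?_
    refine Eventually.of_forall (fun τ => ?_)
    exact (hG_summable τ).hasSum.tendsto_sum_nat
  have hS_bound : ∀ τ, ‖S τ‖ ≤ γ * (E τ * max (τ - tk) 0) := by
    intro τ
    have h1 : ‖S τ‖ ≤ ∑' i, ‖E τ * u i τ‖ := norm_tsum_le_tsum_norm (hG_norm_summable τ)
    have h2 : ∑' i, ‖E τ * u i τ‖ ≤ ∑' i, (E τ * γ) * d i τ := by
      refine Summable.tsum_le_tsum (fun i => ?_) (hG_norm_summable τ)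
        (((hd_summable τ).mul_left (E τ * γ)))
      rw [Real.norm_eq_abs, abs_mul, abs_of_nonneg (by positivity : (0:ℝ) ≤ E τ)]
      calc E τ * |u i τ| ≤ E τ * (d i τ * γ) :=
            mul_le_mul_of_nonneg_left (hu_abs i τ) (by positivity)
        _ = (E τ * γ) * d i τ := by ring
    have h3 : ∑' i, (E τ * γ) * d i τ = (E τ * γ) * max (τ - tk) 0 := by
      rw [tsum_mul_left, hd_tsum τ]
    calc ‖S τ‖ ≤ ∑' i, (E τ * γ) * d i τ := le_trans h1 h2
      _ = γ * (E τ * max (τ - tk) 0) := by rw [h3]; ring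
  have hS_int : IntegrableOn S (Set.Ioi tk) := by
    have hb := (aux_ramp_int η tk 0 hη le_rfl).1
    have hbi : IntegrableOn (fun τ => γ * (E τ * max (τ - tk) 0)) (Set.Ioi tk) := by
      have h := hb.const_mul γ
      simp only [add_zero] at h
      exact h
    exact hbi.mono' hS_meas (ae_of_all _ hS_bound)
  have hExp := aux_exp_int η tk hη
  have hEc : IntegrableOn (fun τ => E τ * xzk) (Set.Ioi tk) := hExp.1.mul_const xzk
  -- main integral computation
  have hmain : ∫ τ in Set.Ioi tk, Real.exp (-η * (τ - tk)) * xz τ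
      = xzk/η + (1-r)/η^2 * ∑' i, r^i * v i := by
    have heq : Set.EqOn (fun τ => Real.exp (-η * (τ - tk)) * xz τ)
        (fun τ => E τ * xzk + S τ) (Set.Ioi tk) := by
      intro τ _
      simp only [hS, hE, hu, hd]
      rw [hxz τ, mul_add]
      congr 1
      exact (tsum_mul_left (a := Real.exp (-η*(τ-tk)))).symm
    rw [setIntegral_congr_fun measurableSet_Ioi heq, integral_add hEc hS_int]
    rw [integral_mul_const, hExp.2]
    rw [hS, hinter, hRHS]
    ring
  -- express the tail sum in terms of xuk
  have hxu : xuk - xzk = (1-r)/η * ∑' i, r^i * v i := by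
    rw [hxuk, hmain]
    field_simp
    ring
  have hA := aux_periodic_tsum r hr0' hr1 C hC v hper γ hv
  have h1r : (1:ℝ) - r ≠ 0 := sub_ne_zero.2 hr1.ne'
  have h1rC : (1:ℝ) - r^C ≠ 0 := sub_ne_zero.2 (pow_lt_one₀ hr0' hr1 hC.ne').ne'
  have hgoal_lhs : ∑ i ∈ Finset.range C, Real.exp (-(i : ℝ) * η * δ) * v i
      = ∑ i ∈ Finset.range C, r^i * v i := by
    refine Finset.sum_congr rfl (fun i _ => ?_)
    rw [hrpow i]
    congr 2
    ring
  have hrC_exp : Real.exp (-(C:ℝ)*η*δ) = r^C := by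
    rw [hrpow C]
    congr 1
    ring
  have hrexp : Real.exp (-η*δ) = r := by
    rw [hrdef]
    congr 1
    ring
  rw [hgoal_lhs, hrC_exp, hrexp]
  have hsum_eq : ∑ i ∈ Finset.range C, r^i * v i = (∑' i, r^i * v i) * (1 - r^C) := by
    rw [hA]
    field_simp
  rw [hsum_eq, hxu]
  field_simp
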